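/- Addition theorem for extended supports: for any two degrees d and d′, Δ̃(d + d′) = Δ̃(d) ∪ Δ̃(d′). -/

import Mathlib

/-!
Common setup: a finite crystallographic root system `R` spanning a Euclidean space `E`,
with a base of simple roots, positive roots, Weyl group, Bruhat order, Hecke (Demazure)
product, degrees, greedy decompositions, extended supports, minimal degrees and
generalized cascades of orthogonal roots, following the conventions of the paper.
-/

open scoped RealInnerProductSpace BigOperators

attribute [local instance] Classical.propDecidable

noncomputable section

variable {E : Type} [NormedAddCommGroup E] [InnerProductSpace ℝ E] [FiniteDimensional ℝ E]

/-- The reflection `s_α` along a root `α` (the orthogonal reflection fixing the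
hyperplane orthogonal to `α`). -/
def sRefl (α : E) : E ≃ₗᵢ[ℝ] E := Submodule.reflection (Submodule.span ℝ {α})ᗮ

/-- The coroot `α^∨ = 2α/(α,α)`. -/
def coroot (α : E) : E := (2 / ⟪α, α⟫) • α

/-- `x` is a nonnegative integral combination of elements of `Δ`. -/
def nonnegComb (Δ : Finset E) (x : E) : Prop :=
  ∃ c : E → ℕ, x = ∑ β ∈ Δ, (c β : ℝ) • β

/-- `x` lies in the `ℤ`-span of `T`. -/
def inZSpan (T : Finset E) (x : E) : Prop :=
  ∃ c : E → ℤ, x = ∑ β ∈ T, (c β : ℝ) • β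

/-- A finite crystallographic (reduced) root system spanning `E`, together with a base:
`R` is the set of roots, `simples` the set of simple roots, `pos` the set of positive
roots. -/
structure RootSystemData (E : Type) [NormedAddCommGroup E] [InnerProductSpace ℝ E]
    [FiniteDimensional ℝ E] where
  R : Finset E
  simples : Finset E
  pos : Finset E
  zero_not_mem : (0 : E) ∉ R
  span_top : Submodule.span ℝ (R : Set E) = ⊤
  neg_mem : ∀ α ∈ R, -α ∈ R
  reduced : ∀ α ∈ R, ∀ t : ℝ, t • α ∈ R → t = 1 ∨ t = -1
  crystallographic : ∀ α ∈ R, ∀ β ∈ R, ∃ n : ℤ, ⟪β, coroot α⟫ = (n : ℝ)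
  refl_mem : ∀ α ∈ R, ∀ β ∈ R, sRefl α β ∈ R
  simples_subset : simples ⊆ pos
  pos_subset : pos ⊆ R
  lin_indep : LinearIndependent ℝ (fun β : simples => (β : E))
  pos_iff : ∀ α ∈ R, (α ∈ pos ↔ nonnegComb simples α)
  pos_or_neg : ∀ α ∈ R, α ∈ pos ∨ -α ∈ pos
  coroot_comb : ∀ α ∈ pos, ∃ c : E → ℕ, coroot α = ∑ β ∈ simples, (c β : ℝ) • coroot β

variable (S : RootSystemData E)

/-- The partial order on roots: `α ≤ α'` iff `α' - α` is a nonnegative combination of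
simple roots. -/
def rootLE (α α' : E) : Prop := nonnegComb S.simples (α' - α)

/-- The partial order on coroots: `corootLE S α α'` means `α^∨ ≤ α'^∨` in `ℤΔ^∨`. -/
def corootLE (α α' : E) : Prop :=
  ∃ c : E → ℕ, coroot α' - coroot α = ∑ β ∈ S.simples, (c β : ℝ) • coroot β

/-- The support `Δ(α)` of a root: the set of simple roots `β` with `β ≤ α`. -/
def suppR (α : E) : Finset E := S.simples.filter fun β => rootLE S β α

/-- The root subsystem `R(α)` of `R` generated by the support `Δ(α)`. -/
def subsysOf (α : E) : Finset E := S.R.filter fun μ => inZSpan (suppR S α) μ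

/-- A positive root `φ` is locally high if it is the highest root of `R(φ)`. -/
def IsLocallyHigh (φ : E) : Prop :=
  φ ∈ S.pos ∧ ∀ μ ∈ subsysOf S φ, rootLE S μ φ

/-- Two roots are strongly orthogonal if neither their sum nor their difference lies
in `R ∪ {0}`. -/
def StronglyOrthogonal (α α' : E) : Prop :=
  α + α' ∉ S.R ∧ α - α' ∉ S.R ∧ α + α' ≠ 0 ∧ α - α' ≠ 0

/-- Two sets of roots are totally disjoint if each element of one is strongly
orthogonal to each element of the other. -/
def TotallyDisjoint (A B : Finset E) : Prop :=
  ∀ a ∈ A, ∀ b ∈ B, StronglyOrthogonal S a b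

/-- Adjacency in the Dynkin diagram: distinct and not orthogonal. -/
def DynkinAdj (β β' : E) : Prop := β ≠ β' ∧ ⟪β, β'⟫ ≠ 0

/-- A set of simple roots is connected (as a subset of the Dynkin diagram). -/
def DynkinConnected (C : Finset E) : Prop :=
  ∀ β ∈ C, ∀ β' ∈ C,
    Relation.ReflTransGen (fun x y => x ∈ C ∧ y ∈ C ∧ DynkinAdj x y) β β'

/-- `C` is a connected component of `A` (as subsets of the Dynkin diagram): a maximal
connected subset of `A`. -/
def IsConnComponent (A C : Finset E) : Prop :=
  C.Nonempty ∧ C ⊆ A ∧ DynkinConnected C ∧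
    ∀ C', C ⊆ C' → C' ⊆ A → DynkinConnected C' → C' = C

/-- `R_P^+`, the set of positive roots lying in `ℤΔ_P`. -/
def posP (ΔP : Finset E) : Finset E := S.pos.filter fun γ => inZSpan ΔP γ

/-- The (nonnegative integral) coefficients of the coroot `α^∨` in the basis of simple
coroots. -/
def corootCoeffs (α : E) : E → ℕ :=
  if h : ∃ c : E → ℕ, (∀ β, β ∉ S.simples → c β = 0) ∧
      coroot α = ∑ β ∈ S.simples, (c β : ℝ) • coroot β
  then h.choose else fun _ => 0

/-- The degree `d(α) = α^∨ + ℤΔ_P^∨`, recorded as the coefficient function on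
`Δ ∖ Δ_P` (a degree is an element of `ℤΔ^∨/ℤΔ_P^∨` with nonnegative coefficients,
i.e. a function `Δ ∖ Δ_P → ℕ`). -/
def degOf (ΔP : Finset E) (α : E) : E → ℕ :=
  fun β => if β ∈ ΔP then 0 else corootCoeffs S α β

/-- A degree: a nonnegative coefficient function supported on `Δ ∖ Δ_P`.  Degrees are
ordered coefficientwise (pointwise). -/
def IsDegree (ΔP : Finset E) (d : E → ℕ) : Prop :=
  ∀ β, β ∉ S.simples \ ΔP → d β = 0

/-- `α` is a maximal root of the degree `d`: a maximal element of
`{α ∈ R⁺ ∖ R_P⁺ : d(α) ≤ d}`. -/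
def IsMaxRoot (ΔP : Finset E) (d : E → ℕ) (α : E) : Prop :=
  α ∈ S.pos ∧ α ∉ posP S ΔP ∧ degOf S ΔP α ≤ d ∧
    ∀ α', α' ∈ S.pos → α' ∉ posP S ΔP → degOf S ΔP α' ≤ d → rootLE S α α' → α' = α

/-- A root `α ∈ R⁺ ∖ R_P⁺` is `P`-cosmall if it is a maximal root of the degree
`d(α)`. -/
def PCosmall (ΔP : Finset E) (α : E) : Prop :=
  IsMaxRoot S ΔP (degOf S ΔP α) α

/-- `IsGreedy S ΔP l d`: the list `l` is a greedy decomposition of the degree `d`. -/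
def IsGreedy (S : RootSystemData E) (ΔP : Finset E) : List E → (E → ℕ) → Prop
  | [], d => d = fun _ => 0
  | α :: t, d => IsMaxRoot S ΔP d α ∧ IsGreedy S ΔP t (d - degOf S ΔP α)

/-- The extended support determined by a (greedy) decomposition: the union of the
supports of its entries. -/
def extSuppOf (l : List E) : Finset E := l.foldr (fun α s => suppR S α ∪ s) ∅

/-- The Weyl group: the subgroup of linear isometries generated by the reflections in
the roots. -/
def weylGroup : Subgroup (E ≃ₗᵢ[ℝ] E) :=
  Subgroup.closure {g | ∃ α ∈ S.R, g = sRefl α}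

/-- The inversion set `I(w) = {γ ∈ R⁺ : w(γ) ∈ -R⁺}`. -/
def invSet (w : E ≃ₗᵢ[ℝ] E) : Finset E := S.pos.filter fun γ => -(w γ) ∈ S.pos

/-- The length of a Weyl group element: the cardinality of its inversion set. -/
def len (w : E ≃ₗᵢ[ℝ] E) : ℕ := (invSet S w).card

/-- The Bruhat order on the Weyl group: generated by multiplication by reflections
which increases length. -/
def bruhatLE (u v : E ≃ₗᵢ[ℝ] E) : Prop :=
  Relation.ReflTransGen (fun x y => (∃ α ∈ S.R, y = x * sRefl α) ∧ len S x < len S y) u v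

/-- The support `Δ(w) = {β ∈ Δ : s_β ⪯ w}` of a Weyl group element. -/
def suppW (w : E ≃ₗᵢ[ℝ] E) : Finset E := S.simples.filter fun β => bruhatLE S (sRefl β) w

/-- The Hecke (Demazure) product: `hecke S u v` is the Bruhat-maximum of
`{u'v' : u' ⪯ u, v' ⪯ v}` (this characterizes the usual Hecke product `u · v` defined
via reduced words). -/
def hecke (u v : E ≃ₗᵢ[ℝ] E) : E ≃ₗᵢ[ℝ] E :=
  if h : ∃ w, (∃ u' v', bruhatLE S u' u ∧ bruhatLE S v' v ∧ w = u' * v') ∧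
      ∀ w', (∃ u' v', bruhatLE S u' u ∧ bruhatLE S v' v ∧ w' = u' * v') → bruhatLE S w' w
  then h.choose else u * v

/-- The Hecke product `g₁ · g₂ · … · gₙ` of a list of Weyl group elements. -/
def heckeFold (l : List (E ≃ₗᵢ[ℝ] E)) : E ≃ₗᵢ[ℝ] E := l.foldl (hecke S) 1

/-- The Hecke product `s_{α₁} · … · s_{αᵣ}` of the reflections along a list of roots. -/
def heckeWord (l : List E) : E ≃ₗᵢ[ℝ] E := heckeFold S (l.map sRefl)

/-- The parabolic subgroup `W_P` of the Weyl group. -/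
def parabolicW (ΔP : Finset E) : Subgroup (E ≃ₗᵢ[ℝ] E) :=
  Subgroup.closure {g | ∃ β ∈ ΔP, g = sRefl β}

/-- The longest element `w_P` of the parabolic subgroup `W_P`. -/
def longestWP (ΔP : Finset E) : E ≃ₗᵢ[ℝ] E :=
  if h : ∃ w ∈ parabolicW ΔP, ∀ w' ∈ parabolicW ΔP, len S w' ≤ len S w
  then h.choose else 1

/-- A choice of greedy decomposition of the degree `d` (the greedy decomposition is
unique up to reordering). -/
def greedyOf (ΔP : Finset E) (d : E → ℕ) : List E :=
  if h : ∃ l, IsGreedy S ΔP l d then h.choose else []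

/-- The element `z_d^P`, determined by `z_d^P w_P = s_{α₁} · … · s_{αᵣ} · w_P` for a
greedy decomposition `(α₁, …, αᵣ)` of `d`. -/
def zP (ΔP : Finset E) (d : E → ℕ) : E ≃ₗᵢ[ℝ] E :=
  heckeFold S ((greedyOf S ΔP d).map sRefl ++ [longestWP S ΔP]) * (longestWP S ΔP)⁻¹

/-- `d ∈ Π_P`: `d` is a minimal degree, i.e. a minimal element of
`{d' : z_d^P ⪯ z_{d'}^P}`. -/
def MemPiP (ΔP : Finset E) (d : E → ℕ) : Prop :=
  IsDegree S ΔP d ∧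
    ∀ d', IsDegree S ΔP d' → bruhatLE S (zP S ΔP d) (zP S ΔP d') → d' ≤ d → d' = d

/-- The element `z_e^B = s_{α₁} · … · s_{αᵣ}` (Hecke product) for a greedy
decomposition `(α₁, …, αᵣ)` of the degree `e ∈ H₂(G/B)`. -/
def zB (e : E → ℕ) : E ≃ₗᵢ[ℝ] E := heckeWord S (greedyOf S ∅ e)

/-- `e ∈ Π_B`: `e` is a minimal degree in `H₂(G/B)`. -/
def MemPiB (e : E → ℕ) : Prop :=
  IsDegree S ∅ e ∧
    ∀ e', IsDegree S ∅ e' → bruhatLE S (zB S e) (zB S e') → e' ≤ e → e' = e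

/-- The generalized cascade of orthogonal roots `B_{R,e}`: the set of positive roots
occurring in a greedy decomposition of `e`. -/
def cascade (e : E → ℕ) : Finset E :=
  S.pos.filter fun α => ∃ l, IsGreedy S ∅ l e ∧ α ∈ l

/-- The generalized chain cascade `C_{R,e}(φ) = {α ∈ B_{R,e} : α ≥ φ}`. -/
def chainCascade (e : E → ℕ) (φ : E) : Finset E :=
  (cascade S e).filter fun α => rootLE S φ α


/-! ### Auxiliary machinery for the addition theorem -/

set_option linter.unusedSectionVars false

set_option maxHeartbeats 1000000

omit [FiniteDimensional ℝ E] in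
lemma auxSRefl_apply (γ x : E) : sRefl γ x = x - (2 * ⟪γ, x⟫ / ⟪γ, γ⟫) • γ := by
  by_cases hγ : γ = 0
  · subst hγ
    simp only [inner_zero_left, mul_zero, zero_div, zero_smul, sub_zero]
    refine Submodule.reflection_mem_subspace_eq_self ?_
    intro u hu
    simp only [Submodule.span_zero_singleton, Submodule.mem_bot] at hu
    simp [hu]
  · have h1 : sRefl γ x = -Submodule.reflection (Submodule.span ℝ {γ}) x :=
      Submodule.reflection_orthogonal_apply (Submodule.span ℝ {γ}) x
    rw [h1, Submodule.reflection_singleton_apply, real_inner_self_eq_norm_sq]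
    simp only [RCLike.ofReal_real_eq_id, id]
    rw [← Nat.cast_smul_eq_nsmul ℝ, smul_smul]
    rw [show ((2:ℕ):ℝ) * (⟪γ, x⟫ / (‖γ‖^2)) = 2 * ⟪γ, x⟫ / ‖γ‖^2 by push_cast; ring]
    abel

omit [FiniteDimensional ℝ E] in
lemma auxCoroot_isometry (g : E ≃ₗᵢ[ℝ] E) (α : E) : coroot (g α) = g (coroot α) := by
  unfold coroot
  rw [LinearIsometryEquiv.inner_map_map, LinearIsometryEquiv.map_smul]

/-- Uniqueness of coefficients w.r.t. the simple roots. -/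
lemma auxCoeffUnique (a b : E → ℝ)
    (h : ∑ β ∈ S.simples, a β • β = ∑ β ∈ S.simples, b β • β) :
    ∀ β ∈ S.simples, a β = b β := by
  have h0 : ∑ x ∈ S.simples.attach, (a x.1 - b x.1) • (x.1 : E) = 0 := by
    rw [Finset.sum_attach S.simples (fun β => (a β - b β) • β)]
    simp only [sub_smul]
    rw [Finset.sum_sub_distrib, h, sub_self]
  intro β hβ
  have := linearIndependent_iff'.mp S.lin_indep S.simples.attach
    (fun x => a x.1 - b x.1) h0 ⟨β, hβ⟩ (Finset.mem_attach _ _)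
  exact sub_eq_zero.mp this

lemma auxRootNeZero {α : E} (hα : α ∈ S.R) : α ≠ 0 := fun h => S.zero_not_mem (h ▸ hα)

lemma auxInnerSelfPos {α : E} (hα : α ∈ S.R) : 0 < ⟪α, α⟫ := by
  rw [real_inner_self_eq_norm_sq]
  have := norm_pos_iff.mpr (auxRootNeZero S hα)
  positivity

lemma auxSimpleNeZero {β : E} (hβ : β ∈ S.simples) : β ≠ 0 :=
  auxRootNeZero S (S.pos_subset (S.simples_subset hβ))

/-- Canonical nonnegative coefficients of a positive root. -/
def pcF (α : E) : E → ℕ :=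
  if h : ∃ c : E → ℕ, (∀ β, β ∉ S.simples → c β = 0) ∧
      α = ∑ β ∈ S.simples, (c β : ℝ) • β
  then h.choose else fun _ => 0

lemma pcF_spec {α : E} (hα : α ∈ S.pos) :
    (∀ β, β ∉ S.simples → pcF S α β = 0) ∧
      α = ∑ β ∈ S.simples, (pcF S α β : ℝ) • β := by
  obtain ⟨c, hc⟩ := (S.pos_iff α (S.pos_subset hα)).mp hα
  have h : ∃ c : E → ℕ, (∀ β, β ∉ S.simples → c β = 0) ∧
      α = ∑ β ∈ S.simples, (c β : ℝ) • β := by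
    refine ⟨fun β => if β ∈ S.simples then c β else 0, fun β hβ => by simp [hβ], ?_⟩
    rw [hc]
    exact Finset.sum_congr rfl fun β hβ => by simp [hβ]
  rw [pcF, dif_pos h]
  exact h.choose_spec

lemma pcF_sum {α : E} (hα : α ∈ S.pos) :
    α = ∑ β ∈ S.simples, (pcF S α β : ℝ) • β := (pcF_spec S hα).2

/-- Any real representation agrees with `pcF`. -/
lemma pcF_unique {α : E} (hα : α ∈ S.pos) (a : E → ℝ)
    (h : α = ∑ β ∈ S.simples, a β • β) :
    ∀ β ∈ S.simples, a β = pcF S α β := by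
  exact auxCoeffUnique S a _ (h ▸ (pcF_sum S hα))

/-- Support characterization: `β ∈ suppR S α ↔ β` simple and has positive coefficient. -/
lemma mem_suppR_iff {α : E} (hα : α ∈ S.pos) {β : E} :
    β ∈ suppR S α ↔ β ∈ S.simples ∧ 0 < pcF S α β := by
  constructor
  · rintro hβ
    rw [suppR, Finset.mem_filter] at hβ
    obtain ⟨hβΔ, c, hc⟩ := hβ
    have hrep : α = ∑ δ ∈ S.simples, ((c δ : ℝ) + if δ = β then 1 else 0) • δ := by
      have hab : α = (α - β) + β := by abel
      rw [hab, hc]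
      simp only [add_smul]
      rw [Finset.sum_add_distrib]
      congr 1
      simp [ite_smul, Finset.sum_ite_eq' S.simples β, hβΔ]
    have hthis := pcF_unique S hα _ hrep β hβΔ
    norm_num at hthis
    refine ⟨hβΔ, ?_⟩
    have h1 : (1:ℝ) ≤ (pcF S α β : ℝ) := by
      rw [← hthis]
      have : (0:ℝ) ≤ (c β : ℝ) := Nat.cast_nonneg _
      linarith
    have h2 : (1:ℕ) ≤ pcF S α β := by exact_mod_cast h1
    omega
  · rintro ⟨hβΔ, hpc⟩
    rw [suppR, Finset.mem_filter]
    refine ⟨hβΔ, fun δ => pcF S α δ - if δ = β then 1 else 0, ?_⟩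
    have h2 : (β : E) = ∑ δ ∈ S.simples, (if δ = β then (1:ℝ) else 0) • δ := by
      simp [ite_smul, Finset.sum_ite_eq' S.simples β, hβΔ]
    have key : ∀ δ ∈ S.simples,
        (((pcF S α δ - if δ = β then 1 else 0 : ℕ)) : ℝ)
          = (pcF S α δ : ℝ) - (if δ = β then (1:ℝ) else 0) := by
      intro δ hδ
      by_cases hd : δ = β
      · subst hd
        have h1le : 1 ≤ pcF S α δ := hpc
        simp [Nat.cast_sub h1le]
      · simp [hd]
    calc α - β = ∑ δ ∈ S.simples, ((pcF S α δ:ℝ) - if δ = β then (1:ℝ) else 0) • δ := by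
          simp only [sub_smul]
          rw [Finset.sum_sub_distrib, ← pcF_sum S hα, ← h2]
      _ = ∑ δ ∈ S.simples, (((pcF S α δ - if δ = β then 1 else 0 : ℕ)):ℝ) • δ :=
          Finset.sum_congr rfl (fun δ hδ => by rw [key δ hδ])

/-- A root that is a nonnegative real combination of the simples is positive. -/
lemma auxPosOfNonnegRep {μ : E} (hμ : μ ∈ S.R) (c : E → ℝ)
    (hc : ∀ β ∈ S.simples, 0 ≤ c β) (hrep : μ = ∑ β ∈ S.simples, c β • β) :
    μ ∈ S.pos := by
  rcases S.pos_or_neg μ hμ with h | h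
  · exact h
  · exfalso
    have hrep2 : -μ = ∑ β ∈ S.simples, (pcF S (-μ) β : ℝ) • β := pcF_sum S h
    have hzero : ∑ β ∈ S.simples, (c β + (pcF S (-μ) β : ℝ)) • β
        = ∑ β ∈ S.simples, (0:ℝ) • β := by
      simp only [add_smul]
      rw [Finset.sum_add_distrib, ← hrep, ← hrep2]
      simp
    have hco := auxCoeffUnique S _ _ hzero
    have hz : μ = 0 := by
      rw [hrep]
      refine Finset.sum_eq_zero fun β hβ => ?_
      have h1 := hco β hβ
      have h2 : (0:ℝ) ≤ (pcF S (-μ) β : ℝ) := Nat.cast_nonneg _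
      have h3 : c β = 0 := by have := hc β hβ; linarith
      rw [h3, zero_smul]
    exact auxRootNeZero S hμ hz

lemma auxSimpleRep {β : E} (hβ : β ∈ S.simples) :
    β = ∑ δ ∈ S.simples, (if δ = β then (1:ℝ) else 0) • δ := by
  simp [ite_smul, Finset.sum_ite_eq' S.simples β, hβ]

lemma auxCrysInt {α γ : E} (hα : α ∈ S.R) (hγ : γ ∈ S.R) :
    ∃ n : ℤ, 2 * ⟪α, γ⟫ / ⟪γ, γ⟫ = (n : ℝ) := by
  obtain ⟨n, hn⟩ := S.crystallographic γ hγ α hα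
  refine ⟨n, ?_⟩
  rw [← hn]
  unfold coroot
  rw [real_inner_smul_right]
  have h := ne_of_gt (auxInnerSelfPos S hγ)
  field_simp

lemma auxSRefl_root (γ α : E) : sRefl γ α = α - (2 * ⟪α, γ⟫ / ⟪γ, γ⟫) • γ := by
  rw [auxSRefl_apply, ← real_inner_comm γ α]

/-- If two roots have positive inner product and are distinct, their difference is a root. -/
lemma auxRootSub {α γ : E} (hα : α ∈ S.R) (hγ : γ ∈ S.R) (hinner : 0 < ⟪α, γ⟫)
    (hne : α ≠ γ) : α - γ ∈ S.R := by
  obtain ⟨m, hm⟩ := auxCrysInt S hα hγ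
  obtain ⟨p, hp⟩ := auxCrysInt S hγ hα
  have hγγ : 0 < ⟪γ, γ⟫ := auxInnerSelfPos S hγ
  have hαα : 0 < ⟪α, α⟫ := auxInnerSelfPos S hα
  have hca : ⟪γ, α⟫ = ⟪α, γ⟫ := (real_inner_comm γ α).symm
  have hm0 : (0:ℝ) < (m:ℝ) := by rw [← hm]; positivity
  have hp0 : (0:ℝ) < (p:ℝ) := by rw [← hp, hca]; positivity
  by_cases hm1 : (m:ℝ) = 1
  · have h := S.refl_mem γ hγ α hα
    rw [auxSRefl_root, hm, hm1, one_smul] at h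
    exact h
  by_cases hp1 : (p:ℝ) = 1
  · have h := S.refl_mem α hα γ hγ
    rw [auxSRefl_root, hp, hp1, one_smul] at h
    have h2 := S.neg_mem _ h
    rw [neg_sub] at h2
    exact h2
  · exfalso
    have hm2 : (2:ℝ) ≤ (m:ℝ) := by
      have h1 : (0:ℤ) < m := by exact_mod_cast hm0
      have h2 : m ≠ 1 := fun h => hm1 (by exact_mod_cast congrArg (Int.cast : ℤ → ℝ) h)
      have : (2:ℤ) ≤ m := by omega
      exact_mod_cast this
    have hp2 : (2:ℝ) ≤ (p:ℝ) := by
      have h1 : (0:ℤ) < p := by exact_mod_cast hp0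
      have h2 : p ≠ 1 := fun h => hp1 (by exact_mod_cast congrArg (Int.cast : ℤ → ℝ) h)
      have : (2:ℤ) ≤ p := by omega
      exact_mod_cast this
    have hmC : 2 * ⟪α, γ⟫ = (m:ℝ) * ⟪γ, γ⟫ := by
      field_simp at hm
      linarith [hm]
    have hpA : 2 * ⟪α, γ⟫ = (p:ℝ) * ⟪α, α⟫ := by
      rw [hca] at hp
      field_simp at hp
      linarith [hp]
    have h4a : 4 * ⟪α, γ⟫^2 = ((m:ℝ) * (p:ℝ)) * (⟪α, α⟫ * ⟪γ, γ⟫) := by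
      linear_combination ((p:ℝ) * ⟪α, α⟫) * hmC + (2 * ⟪α, γ⟫) * hpA
    have hmp : (4:ℝ) ≤ (m:ℝ) * (p:ℝ) := by nlinarith [hm2, hp2]
    have hprod : ⟪α, γ⟫^2 ≥ ⟪α, α⟫ * ⟪γ, γ⟫ := by
      nlinarith [mul_pos hαα hγγ, hmp, h4a]
    have hnα : ⟪α, α⟫ = ‖α‖^2 := real_inner_self_eq_norm_sq α
    have hnγ : ⟪γ, γ⟫ = ‖γ‖^2 := real_inner_self_eq_norm_sq γ
    have hcs : ⟪α, γ⟫ ≤ ‖α‖ * ‖γ‖ := real_inner_le_norm α γ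
    have heq : ⟪α, γ⟫ = ‖α‖ * ‖γ‖ := by
      nlinarith [hprod, hcs, hinner, hnα, hnγ,
        mul_nonneg (sub_nonneg.mpr hcs)
          (by positivity : (0:ℝ) ≤ ‖α‖ * ‖γ‖ + ⟪α, γ⟫)]
    have hsm : ‖γ‖ • α = ‖α‖ • γ := inner_eq_norm_mul_iff_real.mp heq
    have hα0 : ‖α‖ ≠ 0 := norm_ne_zero_iff.mpr (auxRootNeZero S hα)
    have hγeq : (‖α‖⁻¹ * ‖γ‖) • α = γ := by
      have h := congrArg (fun v => (‖α‖)⁻¹ • v) hsm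
      simpa [smul_smul, inv_mul_cancel₀ hα0] using h
    rcases S.reduced α hα _ (hγeq ▸ hγ) with ht | ht
    · rw [ht, one_smul] at hγeq
      exact hne hγeq
    · have hpos : 0 < ‖α‖⁻¹ * ‖γ‖ := by
        have := norm_pos_iff.mpr (auxRootNeZero S hγ)
        have := norm_pos_iff.mpr (auxRootNeZero S hα)
        positivity
      rw [ht] at hpos
      norm_num at hpos

/-- Distinct simple roots have nonpositive inner product. -/
lemma auxSimplesInnerNonpos {β γ : E} (hβ : β ∈ S.simples) (hγ : γ ∈ S.simples)
    (hne : β ≠ γ) : ⟪β, γ⟫ ≤ 0 := by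
  by_contra hpos
  push_neg at hpos
  have hβR := S.pos_subset (S.simples_subset hβ)
  have hγR := S.pos_subset (S.simples_subset hγ)
  have hsub : β - γ ∈ S.R := auxRootSub S hβR hγR hpos hne
  have hrep : β - γ = ∑ δ ∈ S.simples,
      ((if δ = β then (1:ℝ) else 0) - if δ = γ then 1 else 0) • δ := by
    simp only [sub_smul]
    rw [Finset.sum_sub_distrib, ← auxSimpleRep S hβ, ← auxSimpleRep S hγ]
  rcases S.pos_or_neg _ hsub with hp | hp
  · have h1 := pcF_unique S hp _ hrep γ hγ
    rw [if_neg (fun h => hne h.symm), if_pos rfl] at h1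
    have h2 : (0:ℝ) ≤ (pcF S (β - γ) γ : ℝ) := Nat.cast_nonneg _
    linarith
  · have hrep2 : -(β - γ) = ∑ δ ∈ S.simples,
        ((if δ = γ then (1:ℝ) else 0) - if δ = β then 1 else 0) • δ := by
      simp only [sub_smul]
      rw [Finset.sum_sub_distrib, ← auxSimpleRep S hβ, ← auxSimpleRep S hγ]
      abel
    have h1 := pcF_unique S hp _ hrep2 β hβ
    rw [if_neg hne, if_pos rfl] at h1
    have h2 : (0:ℝ) ≤ (pcF S (-(β - γ)) β : ℝ) := Nat.cast_nonneg _
    linarith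

lemma auxIndicatorRep (T : Finset E) {β : E} (hβ : β ∈ T) :
    β = ∑ δ ∈ T, (if δ = β then (1:ℝ) else 0) • δ := by
  simp [ite_smul, Finset.sum_ite_eq' T β, hβ]

lemma corootCoeffs_spec {α : E} (hα : α ∈ S.pos) :
    (∀ β, β ∉ S.simples → corootCoeffs S α β = 0) ∧
      coroot α = ∑ β ∈ S.simples, (corootCoeffs S α β : ℝ) • coroot β := by
  obtain ⟨c, hc⟩ := S.coroot_comb α hα
  have h : ∃ c : E → ℕ, (∀ β, β ∉ S.simples → c β = 0) ∧
      coroot α = ∑ β ∈ S.simples, (c β : ℝ) • coroot β := by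
    refine ⟨fun β => if β ∈ S.simples then c β else 0, fun β hβ => by simp [hβ], ?_⟩
    rw [hc]
    exact Finset.sum_congr rfl fun β hβ => by simp [hβ]
  rw [corootCoeffs, dif_pos h]
  exact h.choose_spec

lemma auxCorootCoeffUnique (a b : E → ℝ)
    (h : ∑ β ∈ S.simples, a β • coroot β = ∑ β ∈ S.simples, b β • coroot β) :
    ∀ β ∈ S.simples, a β = b β := by
  have h' : ∑ β ∈ S.simples, (a β * (2 / ⟪β, β⟫)) • β
      = ∑ β ∈ S.simples, (b β * (2 / ⟪β, β⟫)) • β := by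
    simpa [coroot, smul_smul] using h
  intro β hβ
  have h1 := auxCoeffUnique S _ _ h' β hβ
  have hβ2 : ⟪β, β⟫ ≠ 0 :=
    ne_of_gt (auxInnerSelfPos S (S.pos_subset (S.simples_subset hβ)))
  have h2 : (2 / ⟪β, β⟫ : ℝ) ≠ 0 := div_ne_zero two_ne_zero hβ2
  exact mul_right_cancel₀ h2 h1

lemma pcF_pos_iff_ccPos {α : E} (hα : α ∈ S.pos) {β : E} (hβ : β ∈ S.simples) :
    (0 < pcF S α β ↔ 0 < corootCoeffs S α β) := by
  have hαR := S.pos_subset hα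
  have hαα : 0 < ⟪α, α⟫ := auxInnerSelfPos S hαR
  have hcc := (corootCoeffs_spec S hα).2
  have hrep : α = ∑ δ ∈ S.simples, ((corootCoeffs S α δ : ℝ) * (⟪α, α⟫ / ⟪δ, δ⟫)) • δ := by
    have h1 : (⟪α, α⟫ / 2) • coroot α = α := by
      unfold coroot
      rw [smul_smul]
      have : ⟪α, α⟫ / 2 * (2 / ⟪α, α⟫) = 1 := by field_simp
      rw [this, one_smul]
    calc α = (⟪α, α⟫ / 2) • coroot α := h1.symm
      _ = (⟪α, α⟫ / 2) • ∑ δ ∈ S.simples, (corootCoeffs S α δ : ℝ) • coroot δ := by rw [← hcc]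
      _ = ∑ δ ∈ S.simples, ((corootCoeffs S α δ : ℝ) * (⟪α, α⟫ / ⟪δ, δ⟫)) • δ := by
          rw [Finset.smul_sum]
          refine Finset.sum_congr rfl fun δ hδ => ?_
          unfold coroot
          rw [smul_smul, smul_smul]
          congr 1
          have hδ2 : ⟪δ, δ⟫ ≠ 0 :=
            ne_of_gt (auxInnerSelfPos S (S.pos_subset (S.simples_subset hδ)))
          field_simp
  have key : (pcF S α β : ℝ) = (corootCoeffs S α β : ℝ) * (⟪α, α⟫ / ⟪β, β⟫) :=
    (pcF_unique S hα _ hrep β hβ).symm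
  have hββ : 0 < ⟪β, β⟫ :=
    auxInnerSelfPos S (S.pos_subset (S.simples_subset hβ))
  constructor
  · intro h
    rcases Nat.eq_zero_or_pos (corootCoeffs S α β) with h0 | h0
    · rw [h0] at key
      norm_num at key
      omega
    · exact h0
  · intro h
    have hccR : (0:ℝ) < (corootCoeffs S α β : ℝ) := by exact_mod_cast h
    have : (0:ℝ) < (pcF S α β : ℝ) := by
      rw [key]
      positivity
    exact_mod_cast this

lemma degOf_eq_cc {α β : E} (hβP : β ∉ ΔP) : degOf S ΔP α β = corootCoeffs S α β := by
  simp [degOf, hβP]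

lemma degOf_eq_zero_P {α β : E} (hβP : β ∈ ΔP) : degOf S ΔP α β = 0 := by
  simp [degOf, hβP]

lemma degOf_eq_zero_nonsimple {α β : E} (hα : α ∈ S.pos) (hβ : β ∉ S.simples) :
    degOf S ΔP α β = 0 := by
  by_cases hβP : β ∈ ΔP
  · exact degOf_eq_zero_P S hβP
  · rw [degOf_eq_cc S hβP]
    exact (corootCoeffs_spec S hα).1 β hβ

lemma degOf_pos_iff {α : E} (hα : α ∈ S.pos) {β : E} (hβΔ : β ∈ S.simples)
    (hβP : β ∉ ΔP) : 0 < degOf S ΔP α β ↔ β ∈ suppR S α := by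
  rw [degOf_eq_cc S hβP, mem_suppR_iff S hα, ← pcF_pos_iff_ccPos S hα hβΔ]
  tauto

lemma suppR_subset (α : E) : suppR S α ⊆ S.simples := Finset.filter_subset _ _

lemma suppR_nonempty {α : E} (hα : α ∈ S.pos) : ∃ δ, δ ∈ suppR S α := by
  by_contra h
  push_neg at h
  have hz : α = 0 := by
    rw [pcF_sum S hα]
    refine Finset.sum_eq_zero fun δ hδ => ?_
    have : ¬(0 < pcF S α δ) := fun hp => h δ ((mem_suppR_iff S hα).mpr ⟨hδ, hp⟩)
    have : pcF S α δ = 0 := by omega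
    rw [this]
    simp
  exact auxRootNeZero S (S.pos_subset hα) hz

lemma auxZSpanOfSupp (hM : ΔP ⊆ S.simples) {α : E} (hα : α ∈ S.pos)
    (h : suppR S α ⊆ ΔP) : inZSpan ΔP α := by
  refine ⟨fun β => (pcF S α β : ℤ), ?_⟩
  have hvanish : ∀ β ∈ S.simples, β ∉ ΔP → ((pcF S α β : ℤ) : ℝ) • β = 0 := by
    intro β hβ hβP
    have : ¬(0 < pcF S α β) := fun hp => hβP (h ((mem_suppR_iff S hα).mpr ⟨hβ, hp⟩))
    have h0 : pcF S α β = 0 := by omega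
    rw [h0]
    simp
  have hsum : ∑ β ∈ ΔP, ((pcF S α β : ℤ) : ℝ) • β
      = ∑ β ∈ S.simples, ((pcF S α β : ℤ) : ℝ) • β :=
    Finset.sum_subset hM hvanish
  rw [hsum]
  simp only [Int.cast_natCast]
  exact pcF_sum S hα

lemma auxZSpan_sub {x β : E} (hx : inZSpan ΔP x) (hβ : β ∈ ΔP) (n : ℤ) :
    inZSpan ΔP (x - (n : ℝ) • β) := by
  obtain ⟨c, hc⟩ := hx
  refine ⟨fun δ => c δ - if δ = β then n else 0, ?_⟩
  have hb : (n : ℝ) • β = ∑ δ ∈ ΔP, (if δ = β then (n:ℝ) else 0) • δ := by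
    simp [ite_smul, Finset.sum_ite_eq' ΔP β, hβ]
  rw [hc, hb, ← Finset.sum_sub_distrib]
  refine Finset.sum_congr rfl fun δ hδ => ?_
  rw [← sub_smul]
  congr 1
  by_cases hd : δ = β <;> simp [hd]

lemma extSuppOf_cons (a : E) (t : List E) :
    extSuppOf S (a :: t) = suppR S a ∪ extSuppOf S t := rfl

lemma mem_extSuppOf {l : List E} {β : E} :
    β ∈ extSuppOf S l ↔ ∃ α ∈ l, β ∈ suppR S α := by
  induction l with
  | nil =>
    show β ∈ (∅ : Finset E) ↔ _
    simp
  | cons a t ih =>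
    rw [extSuppOf_cons, Finset.mem_union, ih]
    simp

lemma auxGreedy_max {l : List E} {e : E → ℕ} (hg : IsGreedy S ΔP l e) :
    ∀ α ∈ l, ∃ e', (∀ x, e' x ≤ e x) ∧ IsMaxRoot S ΔP e' α := by
  induction l generalizing e with
  | nil => intro α h; simp at h
  | cons a t ih =>
    rw [IsGreedy] at hg
    intro α hm
    rcases List.mem_cons.mp hm with rfl | hmt
    · exact ⟨e, fun x => le_refl _, hg.1⟩
    · obtain ⟨e', he', hmax⟩ := ih hg.2 α hmt
      exact ⟨e', fun x => le_trans (he' x) (Nat.sub_le _ _), hmax⟩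

lemma auxGreedy_mem_pos {l : List E} {e : E → ℕ} (hg : IsGreedy S ΔP l e) :
    ∀ α ∈ l, α ∈ S.pos := by
  intro α hα
  obtain ⟨e', _, hmax⟩ := auxGreedy_max S hg α hα
  exact hmax.1

lemma auxGreedy_sum {l : List E} {e : E → ℕ} (hg : IsGreedy S ΔP l e) (x : E) :
    (l.map (fun α => degOf S ΔP α x)).sum = e x := by
  induction l generalizing e with
  | nil =>
    rw [IsGreedy] at hg
    simp [hg]
  | cons a t ih =>
    rw [IsGreedy] at hg
    have h1 := ih hg.2
    simp only [List.map_cons, List.sum_cons]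
    rw [h1]
    have hle : degOf S ΔP a x ≤ e x := hg.1.2.2.1 x
    have : (e - degOf S ΔP a) x = e x - degOf S ΔP a x := rfl
    rw [this]
    omega

lemma auxGreedy_exists_pos {l : List E} {e : E → ℕ} (hg : IsGreedy S ΔP l e) {x : E}
    (hx : 0 < e x) : ∃ α ∈ l, 0 < degOf S ΔP α x := by
  by_contra h
  push_neg at h
  have h0 : (l.map (fun α => degOf S ΔP α x)).sum = 0 := by
    apply List.sum_eq_zero
    intro y hy
    obtain ⟨α, hαl, rfl⟩ := List.mem_map.mp hy
    have := h α hαl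
    omega
  rw [auxGreedy_sum S hg x] at h0
  omega

/-- Key lemma: if `α` is a maximal root of a degree `e` and `β ∈ Δ_P` is adjacent to
the support of `α`, then `β` lies in the support of `α`. -/
lemma auxMaxRootAbsorb (hM : ΔP ⊆ S.simples) {e : E → ℕ} {α : E}
    (hmax : IsMaxRoot S ΔP e α) {β : E} (hβP : β ∈ ΔP) {δ : E} (hδ : δ ∈ suppR S α)
    (hinner : ⟪β, δ⟫ ≠ 0) : β ∈ suppR S α := by
  by_contra hβs
  obtain ⟨hαpos, hαnP, hdeg, hmx⟩ := hmax
  have hαR : α ∈ S.R := S.pos_subset hαpos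
  have hβΔ : β ∈ S.simples := hM hβP
  have hβR : β ∈ S.R := S.pos_subset (S.simples_subset hβΔ)
  have hβδ : β ≠ δ := fun h => hβs (h ▸ hδ)
  have hβδneg : ⟪β, δ⟫ < 0 :=
    lt_of_le_of_ne (auxSimplesInnerNonpos S hβΔ ((suppR_subset S α) hδ) hβδ) hinner
  have hpcβ : pcF S α β = 0 := by
    rcases Nat.eq_zero_or_pos (pcF S α β) with h0 | h0
    · exact h0
    · exact absurd ((mem_suppR_iff S hαpos).mpr ⟨hβΔ, h0⟩) hβs
  -- ⟪β, α⟫ < 0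
  have hβα : ⟪β, α⟫ < 0 := by
    have hsum : ⟪β, α⟫ = ∑ γ ∈ S.simples, (pcF S α γ : ℝ) * ⟪β, γ⟫ := by
      conv_lhs => rw [pcF_sum S hαpos]
      rw [inner_sum]
      exact Finset.sum_congr rfl fun γ hγ => by rw [real_inner_smul_right]
    rw [hsum]
    have h0 : (0:ℝ) = ∑ _γ ∈ S.simples, (0:ℝ) := by simp
    rw [h0]
    refine Finset.sum_lt_sum ?_ ?_
    · intro γ hγ
      by_cases hgb : γ = β
      · subst hgb
        rw [hpcβ]
        simp
      · refine mul_nonpos_iff.mpr (Or.inl ⟨Nat.cast_nonneg _, ?_⟩)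
        exact auxSimplesInnerNonpos S hβΔ hγ (fun h => hgb h.symm)
    · refine ⟨δ, (suppR_subset S α) hδ, ?_⟩
      have hδpc : 0 < pcF S α δ := ((mem_suppR_iff S hαpos).mp hδ).2
      have : (0:ℝ) < (pcF S α δ : ℝ) := by exact_mod_cast hδpc
      exact mul_neg_of_pos_of_neg this hβδneg
  obtain ⟨n, hn⟩ := auxCrysInt S hαR hβR
  have hββ : 0 < ⟪β, β⟫ := auxInnerSelfPos S hβR
  have hαβ : ⟪α, β⟫ < 0 := by rwa [real_inner_comm] at hβα
  have hnneg : (n : ℝ) < 0 := by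
    rw [← hn]
    apply div_neg_of_neg_of_pos _ hββ
    linarith
  have hnint : n < 0 := by exact_mod_cast hnneg
  -- the reflected root α' = α - n β
  set α' := sRefl β α with hα'def
  have hα'R : α' ∈ S.R := S.refl_mem β hβR α hαR
  have hα'eq : α' = α - (n : ℝ) • β := by
    rw [hα'def, auxSRefl_root, hn]
  -- α' is positive
  have hα'rep : α' = ∑ γ ∈ S.simples,
      ((pcF S α γ : ℝ) + if γ = β then (-(n:ℝ)) else 0) • γ := by
    rw [hα'eq]
    have hb : (n : ℝ) • β = ∑ γ ∈ S.simples, (if γ = β then (n:ℝ) else 0) • γ := by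
      simp [ite_smul, Finset.sum_ite_eq' S.simples β, hβΔ]
    conv_lhs => rw [pcF_sum S hαpos, hb]
    rw [← Finset.sum_sub_distrib]
    refine Finset.sum_congr rfl fun γ hγ => ?_
    rw [← sub_smul]
    congr 1
    by_cases hgb : γ = β <;> simp [hgb] <;> ring
  have hα'pos : α' ∈ S.pos := by
    refine auxPosOfNonnegRep S hα'R _ (fun γ hγ => ?_) hα'rep
    have h1 : (0:ℝ) ≤ (pcF S α γ : ℝ) := Nat.cast_nonneg _
    by_cases hgb : γ = β <;> simp [hgb] <;> linarith
  -- α' is not in posP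
  have hα'nP : α' ∉ posP S ΔP := by
    intro hmem
    rw [posP, Finset.mem_filter] at hmem
    have hz : inZSpan ΔP (α' - ((-n : ℤ) : ℝ) • β) := auxZSpan_sub hmem.2 hβP (-n)
    have : α' - ((-n : ℤ) : ℝ) • β = α := by
      rw [hα'eq]
      push_cast
      rw [neg_smul]
      abel
    rw [this] at hz
    exact hαnP (by rw [posP, Finset.mem_filter]; exact ⟨hαpos, hz⟩)
  -- degrees agree
  have hdeg' : degOf S ΔP α' = degOf S ΔP α := by
    have hco : coroot α' = sRefl β (coroot α) := auxCoroot_isometry (sRefl β) α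
    have hrep1 : coroot α' = ∑ γ ∈ S.simples,
        ((corootCoeffs S α γ : ℝ) - if γ = β then ⟪coroot α, β⟫ else 0) • coroot γ := by
      set t := ⟪coroot α, β⟫ with ht
      have hco2 : sRefl β (coroot α) = coroot α - t • coroot β := by
        rw [auxSRefl_root, ← ht]
        congr 1
        show (2 * t / ⟪β, β⟫) • β = t • ((2 / ⟪β, β⟫) • β)
        rw [smul_smul]
        congr 1
        field_simp
      rw [hco, hco2]
      have hb : t • coroot β
          = ∑ γ ∈ S.simples, (if γ = β then t else 0) • coroot γ := by
        simp [ite_smul, Finset.sum_ite_eq' S.simples β, hβΔ]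
      rw [hb]
      conv_lhs => rw [(corootCoeffs_spec S hαpos).2]
      rw [← Finset.sum_sub_distrib]
      exact Finset.sum_congr rfl fun γ hγ => by rw [← sub_smul]
    have hrep2 : coroot α' = ∑ γ ∈ S.simples, (corootCoeffs S α' γ : ℝ) • coroot γ :=
      (corootCoeffs_spec S hα'pos).2
    have huniq := auxCorootCoeffUnique S _ _ (hrep2 ▸ hrep1).symm
    funext x
    by_cases hxP : x ∈ ΔP
    · rw [degOf_eq_zero_P S hxP, degOf_eq_zero_P S hxP]
    · by_cases hxΔ : x ∈ S.simples
      · have hxβ : x ≠ β := fun h => hxP (h ▸ hβP)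
        have := huniq x hxΔ
        rw [if_neg hxβ, sub_zero] at this
        rw [degOf_eq_cc S hxP, degOf_eq_cc S hxP]
        exact_mod_cast this.symm
      · rw [degOf_eq_zero_nonsimple S hα'pos hxΔ, degOf_eq_zero_nonsimple S hαpos hxΔ]
  -- α ≤ α'
  have hle : rootLE S α α' := by
    refine ⟨fun γ => if γ = β then (-n).toNat else 0, ?_⟩
    have : α' - α = (-(n:ℝ)) • β := by
      rw [hα'eq, neg_smul]
      abel
    rw [this]
    have hcast : ((((-n).toNat : ℕ)) : ℝ) = -(n:ℝ) := by
      have h2 : ((-n).toNat : ℤ) = -n := Int.toNat_of_nonneg (by omega)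
      exact_mod_cast h2
    have hb : (-(n:ℝ)) • β = ∑ γ ∈ S.simples, (if γ = β then (-(n:ℝ)) else 0) • γ := by
      simp [ite_smul, Finset.sum_ite_eq' S.simples β, hβΔ]
    rw [hb]
    refine Finset.sum_congr rfl fun γ hγ => ?_
    congr 1
    by_cases hgb : γ = β <;> simp [hgb, hcast]
  -- α' ≠ α
  have hne : α' ≠ α := by
    intro h
    have h0 : (n:ℝ) • β = 0 := by
      have h1 : α = α - (n:ℝ) • β := by rw [← hα'eq, h]
      calc (n:ℝ) • β = α - (α - (n:ℝ) • β) := by abel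
        _ = α - α := by rw [← h1]
        _ = 0 := sub_self α
    have hn0 : (n:ℝ) ≠ 0 := ne_of_lt hnneg
    exact auxRootNeZero S hβR ((smul_eq_zero.mp h0).resolve_left hn0)
  have := hmx α' hα'pos hα'nP (hdeg' ▸ hdeg) hle
  exact hne this

/-- Adjacency within a set of simple roots. -/
def auxAdj (A : Finset E) (x y : E) : Prop :=
  x ∈ A ∧ y ∈ A ∧ x ≠ y ∧ ⟪x, y⟫ ≠ 0

lemma pcF_simple {β : E} (hβ : β ∈ S.simples) :
    ∀ δ ∈ S.simples, (pcF S β δ : ℝ) = if δ = β then 1 else 0 := by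
  intro δ hδ
  exact (pcF_unique S (S.simples_subset hβ) _ (auxSimpleRep S hβ) δ hδ).symm

lemma auxSelfSupp {β : E} (hβ : β ∈ S.simples) : β ∈ suppR S β := by
  rw [mem_suppR_iff S (S.simples_subset hβ)]
  refine ⟨hβ, ?_⟩
  have h := pcF_simple S hβ β hβ
  rw [if_pos rfl] at h
  have : pcF S β β = 1 := by exact_mod_cast h
  omega

lemma auxInnerRep {α : E} (hα : α ∈ S.pos) (x : E) :
    ⟪x, α⟫ = ∑ γ ∈ S.simples, (pcF S α γ : ℝ) * ⟪x, γ⟫ := by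
  conv_lhs => rw [pcF_sum S hα]
  rw [inner_sum]
  exact Finset.sum_congr rfl fun γ hγ => by rw [real_inner_smul_right]

/-- The support of a positive root is connected in the Dynkin diagram. -/
lemma auxSuppConnected :
    ∀ n : ℕ, ∀ α : E, α ∈ S.pos → (∑ δ ∈ S.simples, pcF S α δ) = n →
      ∀ β ∈ suppR S α, ∀ β' ∈ suppR S α,
        Relation.ReflTransGen (auxAdj (suppR S α)) β β' := by
  intro n
  induction n using Nat.strong_induction_on with
  | _ n ih =>
    intro α hαpos hht β hβ β' hβ'
    have hαR : α ∈ S.R := S.pos_subset hαpos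
    by_cases hαΔ : α ∈ S.simples
    · -- α is simple: support is {α}
      have hsupp : ∀ x ∈ suppR S α, x = α := by
        intro x hx
        obtain ⟨hxΔ, hxpc⟩ := (mem_suppR_iff S hαpos).mp hx
        have h := pcF_simple S hαΔ x hxΔ
        by_cases hxα : x = α
        · exact hxα
        · rw [if_neg hxα] at h
          have : pcF S α x = 0 := by exact_mod_cast h
          omega
      rw [hsupp β hβ, hsupp β' hβ']
    · -- α is not simple
      -- find γ ∈ supp(α) with ⟪α, γ⟫ > 0
      have hαα : 0 < ⟪α, α⟫ := auxInnerSelfPos S hαR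
      have hsum := auxInnerRep S hαpos α
      have hex : ∃ γ ∈ S.simples, 0 < (pcF S α γ : ℝ) * ⟪α, γ⟫ := by
        by_contra hc
        push_neg at hc
        have : ⟪α, α⟫ ≤ 0 := by
          rw [hsum]
          exact Finset.sum_nonpos hc
        linarith
      obtain ⟨γ, hγΔ, hγterm⟩ := hex
      have hγR : γ ∈ S.R := S.pos_subset (S.simples_subset hγΔ)
      have hγpc : 0 < pcF S α γ := by
        rcases Nat.eq_zero_or_pos (pcF S α γ) with h0 | h0
        · rw [h0] at hγterm; norm_num at hγterm
        · exact h0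
      have hαγ : 0 < ⟪α, γ⟫ := by
        rcases lt_trichotomy (0:ℝ) ⟪α, γ⟫ with h | h | h
        · exact h
        · rw [← h] at hγterm; norm_num at hγterm
        · exfalso
          have h1 : (0:ℝ) ≤ (pcF S α γ : ℝ) := Nat.cast_nonneg _
          nlinarith
      have hγsupp : γ ∈ suppR S α := (mem_suppR_iff S hαpos).mpr ⟨hγΔ, hγpc⟩
      have hne : α ≠ γ := fun h => hαΔ (h ▸ hγΔ)
      -- μ := α - γ is a positive root
      have hμR : α - γ ∈ S.R := auxRootSub S hαR hγR hαγ hne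
      set μ := α - γ with hμdef
      have hrepμ : μ = ∑ δ ∈ S.simples,
          ((pcF S α δ : ℝ) - if δ = γ then 1 else 0) • δ := by
        rw [hμdef]
        conv_lhs => rw [pcF_sum S hαpos, auxSimpleRep S hγΔ]
        rw [← Finset.sum_sub_distrib]
        exact Finset.sum_congr rfl fun δ hδ => by rw [← sub_smul]
      have hμpos : μ ∈ S.pos := by
        refine auxPosOfNonnegRep S hμR _ (fun δ hδ => ?_) hrepμ
        by_cases hdg : δ = γ
        · subst hdg
          rw [if_pos rfl]
          have : (1:ℝ) ≤ (pcF S α δ : ℝ) := by exact_mod_cast hγpc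
          linarith
        · rw [if_neg hdg, sub_zero]
          exact Nat.cast_nonneg _
      have huniq := pcF_unique S hμpos _ hrepμ
      have hpcne : ∀ δ ∈ S.simples, δ ≠ γ → pcF S μ δ = pcF S α δ := by
        intro δ hδ hdg
        have h := huniq δ hδ
        rw [if_neg hdg, sub_zero] at h
        exact_mod_cast h.symm
      have hpcγ : pcF S μ γ + 1 = pcF S α γ := by
        have h := huniq γ hγΔ
        rw [if_pos rfl] at h
        have : (pcF S μ γ : ℝ) + 1 = (pcF S α γ : ℝ) := by linarith
        exact_mod_cast this
      -- height decreases
      have hsum' : (∑ δ ∈ S.simples, pcF S μ δ) + 1 = n := by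
        rw [← hht]
        have h1 : ∀ δ ∈ S.simples, pcF S α δ = pcF S μ δ + (if δ = γ then 1 else 0) := by
          intro δ hδ
          by_cases hdg : δ = γ
          · subst hdg; rw [if_pos rfl]; omega
          · rw [if_neg hdg, hpcne δ hδ hdg]; omega
        rw [Finset.sum_congr rfl h1, Finset.sum_add_distrib, Finset.sum_ite_eq' S.simples γ]
        simp [hγΔ]
      have hlt : (∑ δ ∈ S.simples, pcF S μ δ) < n := by omega
      have IH := ih _ hlt μ hμpos rfl
      -- supp(μ) ⊆ supp(α)
      have hsub : suppR S μ ⊆ suppR S α := by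
        intro δ hδ
        obtain ⟨hδΔ, hδpc⟩ := (mem_suppR_iff S hμpos).mp hδ
        refine (mem_suppR_iff S hαpos).mpr ⟨hδΔ, ?_⟩
        by_cases hdg : δ = γ
        · subst hdg; omega
        · rw [← hpcne δ hδΔ hdg]; exact hδpc
      have hmono : ∀ x y, auxAdj (suppR S μ) x y → auxAdj (suppR S α) x y :=
        fun x y hxy => ⟨hsub hxy.1, hsub hxy.2.1, hxy.2.2⟩
      by_cases hγμ : γ ∈ suppR S μ
      · -- supp(α) = supp(μ)
        have hsub2 : suppR S α ⊆ suppR S μ := by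
          intro δ hδ
          obtain ⟨hδΔ, hδpc⟩ := (mem_suppR_iff S hαpos).mp hδ
          by_cases hdg : δ = γ
          · subst hdg; exact hγμ
          · exact (mem_suppR_iff S hμpos).mpr ⟨hδΔ, by rw [hpcne δ hδΔ hdg]; exact hδpc⟩
        exact Relation.ReflTransGen.mono hmono _ _ (IH β (hsub2 hβ) β' (hsub2 hβ'))
      · -- γ ∉ supp(μ): attach γ via an edge
        have hpcμγ : pcF S μ γ = 0 := by
          rcases Nat.eq_zero_or_pos (pcF S μ γ) with h0 | h0
          · exact h0
          · exact absurd ((mem_suppR_iff S hμpos).mpr ⟨hγΔ, h0⟩) hγμ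
        have hμγne : μ ≠ γ := fun h => hγμ (by rw [h]; exact auxSelfSupp S hγΔ)
        -- μ - γ is not a root
        have hnotR : μ - γ ∉ S.R := by
          intro hmem
          rcases S.pos_or_neg _ hmem with hp | hp
          · have hrep2 : μ - γ = ∑ δ ∈ S.simples,
                ((pcF S μ δ : ℝ) - if δ = γ then 1 else 0) • δ := by
              conv_lhs => rw [pcF_sum S hμpos, auxSimpleRep S hγΔ]
              rw [← Finset.sum_sub_distrib]
              exact Finset.sum_congr rfl fun δ hδ => by rw [← sub_smul]
            have h := pcF_unique S hp _ hrep2 γ hγΔ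
            rw [if_pos rfl, hpcμγ] at h
            have h2 : (0:ℝ) ≤ (pcF S (μ - γ) γ : ℝ) := Nat.cast_nonneg _
            norm_num at h
            linarith
          · obtain ⟨δ1, hδ1⟩ := suppR_nonempty S hμpos
            obtain ⟨hδ1Δ, hδ1pc⟩ := (mem_suppR_iff S hμpos).mp hδ1
            have hδ1γ : δ1 ≠ γ := fun h => hγμ (h ▸ hδ1)
            have hrep2 : -(μ - γ) = ∑ δ ∈ S.simples,
                ((if δ = γ then (1:ℝ) else 0) - (pcF S μ δ : ℝ)) • δ := by
              have : -(μ - γ) = γ - μ := by abel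
              rw [this]
              conv_lhs => rw [pcF_sum S hμpos, auxSimpleRep S hγΔ]
              rw [← Finset.sum_sub_distrib]
              exact Finset.sum_congr rfl fun δ hδ => by rw [← sub_smul]
            have h := pcF_unique S hp _ hrep2 δ1 hδ1Δ
            rw [if_neg hδ1γ] at h
            have h2 : (0:ℝ) ≤ (pcF S (-(μ - γ)) δ1 : ℝ) := Nat.cast_nonneg _
            have h3 : (0:ℝ) < (pcF S μ δ1 : ℝ) := by exact_mod_cast hδ1pc
            linarith
        -- hence ⟪γ, μ⟫ < 0
        have hγμneg : ⟪γ, μ⟫ < 0 := by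
          rcases lt_trichotomy (⟪γ, μ⟫ : ℝ) 0 with h | h | h
          · exact h
          · exfalso
            -- orthogonal: then sRefl γ α = μ - γ ∈ R
            have hαγ2 : ⟪α, γ⟫ = ⟪γ, γ⟫ := by
              have : α = μ + γ := by rw [hμdef]; abel
              rw [this, inner_add_left]
              have : ⟪μ, γ⟫ = ⟪γ, μ⟫ := real_inner_comm γ μ
              rw [this, h, zero_add]
            have hγγ : ⟪γ, γ⟫ ≠ 0 := ne_of_gt (auxInnerSelfPos S hγR)
            have hrefl := S.refl_mem γ hγR α hαR
            rw [auxSRefl_root, hαγ2] at hrefl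
            have h2 : 2 * ⟪γ, γ⟫ / ⟪γ, γ⟫ = (2:ℝ) := by field_simp
            rw [h2] at hrefl
            have h3 : α - (2:ℝ) • γ = μ - γ := by
              rw [hμdef]
              have : (2:ℝ) • γ = γ + γ := two_smul ℝ γ
              rw [this]
              abel
            rw [h3] at hrefl
            exact hnotR hrefl
          · exfalso
            have hμγ : 0 < ⟪μ, γ⟫ := by rwa [real_inner_comm] at h
            exact hnotR (auxRootSub S hμR hγR hμγ hμγne)
        -- find δ1 ∈ supp(μ) adjacent to γ
        have hsum2 := auxInnerRep S hμpos γ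
        have hex2 : ∃ δ1 ∈ S.simples, (pcF S μ δ1 : ℝ) * ⟪γ, δ1⟫ < 0 := by
          by_contra hc
          push_neg at hc
          have : (0:ℝ) ≤ ⟪γ, μ⟫ := by
            rw [hsum2]
            exact Finset.sum_nonneg hc
          linarith
        obtain ⟨δ1, hδ1Δ, hδ1term⟩ := hex2
        have hδ1pc : 0 < pcF S μ δ1 := by
          rcases Nat.eq_zero_or_pos (pcF S μ δ1) with h0 | h0
          · rw [h0] at hδ1term; norm_num at hδ1term
          · exact h0
        have hδ1inner : ⟪γ, δ1⟫ < 0 := by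
          have h1 : (0:ℝ) ≤ (pcF S μ δ1 : ℝ) := Nat.cast_nonneg _
          nlinarith
        have hδ1μ : δ1 ∈ suppR S μ := (mem_suppR_iff S hμpos).mpr ⟨hδ1Δ, hδ1pc⟩
        have hγδ1 : γ ≠ δ1 := fun h => hγμ (h ▸ hδ1μ)
        have hedge : auxAdj (suppR S α) γ δ1 :=
          ⟨hγsupp, hsub hδ1μ, hγδ1, ne_of_lt hδ1inner⟩
        have hedge' : auxAdj (suppR S α) δ1 γ := by
          refine ⟨hsub hδ1μ, hγsupp, fun h => hγδ1 h.symm, ?_⟩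
          rw [real_inner_comm]
          exact ne_of_lt hδ1inner
        -- supp(α) \ {γ} ⊆ supp(μ)
        have hsub2 : ∀ x ∈ suppR S α, x ≠ γ → x ∈ suppR S μ := by
          intro x hx hxγ
          obtain ⟨hxΔ, hxpc⟩ := (mem_suppR_iff S hαpos).mp hx
          exact (mem_suppR_iff S hμpos).mpr ⟨hxΔ, by rw [hpcne x hxΔ hxγ]; exact hxpc⟩
        -- path from γ to any x ∈ supp(α)
        have hfrom : ∀ x ∈ suppR S α, Relation.ReflTransGen (auxAdj (suppR S α)) γ x := by
          intro x hx
          by_cases hxγ : x = γ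
          · rw [hxγ]
          · refine Relation.ReflTransGen.head hedge ?_
            exact Relation.ReflTransGen.mono hmono _ _ (IH δ1 hδ1μ x (hsub2 x hx hxγ))
        have hto : ∀ x ∈ suppR S α, Relation.ReflTransGen (auxAdj (suppR S α)) x γ := by
          intro x hx
          by_cases hxγ : x = γ
          · rw [hxγ]
          · refine Relation.ReflTransGen.tail ?_ hedge'
            exact Relation.ReflTransGen.mono hmono _ _ (IH x (hsub2 x hx hxγ) δ1 hδ1μ)
        exact Relation.ReflTransGen.trans (hto β hβ) (hfrom β' hβ')

/-- Reachability: `β` is connected to the support of the degree `e` by a path whose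
vertices (after the first) lie in `Δ_P`. -/
def auxReach (ΔP : Finset E) (e : E → ℕ) (β : E) : Prop :=
  ∃ γ, γ ∈ S.simples ∧ 0 < e γ ∧
    Relation.ReflTransGen (fun a b => b ∈ ΔP ∧ a ≠ b ∧ ⟪a, b⟫ ≠ 0) γ β

omit [FiniteDimensional ℝ E] in
lemma auxSplit {A ΔP : Finset E} {x β : E}
    (hpath : Relation.ReflTransGen (auxAdj A) x β) (hβ : β ∈ ΔP) :
    (∃ γ ∈ A, γ ∉ ΔP ∧
        Relation.ReflTransGen (fun a b => b ∈ ΔP ∧ a ≠ b ∧ ⟪a, b⟫ ≠ 0) γ β)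
      ∨ (x ∈ ΔP ∧
        Relation.ReflTransGen (fun a b => b ∈ ΔP ∧ a ≠ b ∧ ⟪a, b⟫ ≠ 0) x β) := by
  refine Relation.ReflTransGen.head_induction_on hpath
    (Or.inr ⟨hβ, Relation.ReflTransGen.refl⟩) ?_
  intro a c h' h ih
  obtain ⟨haA, hcA, hne, hinn⟩ := h'
  rcases ih with hL | ⟨hcP, hcpath⟩
  · exact Or.inl hL
  · have hpath2 : Relation.ReflTransGen (fun a b => b ∈ ΔP ∧ a ≠ b ∧ ⟪a, b⟫ ≠ 0) a β :=
      Relation.ReflTransGen.head ⟨hcP, hne, hinn⟩ hcpath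
    by_cases haP : a ∈ ΔP
    · exact Or.inr ⟨haP, hpath2⟩
    · exact Or.inl ⟨a, haA, haP, hpath2⟩

/-- Characterization of the extended support of a greedy decomposition. -/
lemma auxChar (hM : ΔP ⊆ S.simples) {l : List E} {e : E → ℕ}
    (hg : IsGreedy S ΔP l e) {β : E} :
    β ∈ extSuppOf S l ↔ auxReach S ΔP e β := by
  constructor
  · intro hmem
    obtain ⟨α, hαl, hβsupp⟩ := (mem_extSuppOf S).mp hmem
    obtain ⟨e', hle, hmax⟩ := auxGreedy_max S hg α hαl
    have hαpos : α ∈ S.pos := hmax.1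
    have key : ∀ x ∈ suppR S α, x ∉ ΔP → 0 < e x := by
      intro x hx hxP
      have h1 : 0 < degOf S ΔP α x :=
        (degOf_pos_iff S hαpos ((suppR_subset S α) hx) hxP).mpr hx
      have h2 : degOf S ΔP α x ≤ e' x := hmax.2.2.1 x
      have h3 := hle x
      omega
    by_cases hβP : β ∈ ΔP
    · -- find a vertex of supp(α) outside ΔP and a path
      have hnsub : ¬(suppR S α ⊆ ΔP) := by
        intro hsub
        exact hmax.2.1 (by
          rw [posP, Finset.mem_filter]
          exact ⟨hαpos, auxZSpanOfSupp S hM hαpos hsub⟩)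
      obtain ⟨x, hxsupp, hxP⟩ := Finset.not_subset.mp hnsub
      have hpath := auxSuppConnected S _ α hαpos rfl x hxsupp β hβsupp
      rcases auxSplit hpath hβP with ⟨γ, hγA, hγP, hp⟩ | ⟨hxPmem, _⟩
      · exact ⟨γ, (suppR_subset S α) hγA, key γ hγA hγP, hp⟩
      · exact absurd hxPmem hxP
    · exact ⟨β, (suppR_subset S α) hβsupp, key β hβsupp hβP,
        Relation.ReflTransGen.refl⟩
  · rintro ⟨γ, hγΔ, hγe, hpath⟩
    induction hpath with
    | refl =>
      obtain ⟨α, hαl, hα⟩ := auxGreedy_exists_pos S hg hγe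
      have hαpos : α ∈ S.pos := auxGreedy_mem_pos S hg α hαl
      have hγP : γ ∉ ΔP := by
        intro h
        rw [degOf_eq_zero_P S h] at hα
        omega
      exact (mem_extSuppOf S).mpr ⟨α, hαl,
        (degOf_pos_iff S hαpos hγΔ hγP).mp hα⟩
    | tail hab hbc ih =>
      rename_i b c
      obtain ⟨hcP, hbc_ne, hbc_inn⟩ := hbc
      obtain ⟨α, hαl, hbsupp⟩ := (mem_extSuppOf S).mp ih
      obtain ⟨e', hle, hmax⟩ := auxGreedy_max S hg α hαl
      have hcinn : ⟪c, b⟫ ≠ 0 := by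
        rw [real_inner_comm]
        exact hbc_inn
      exact (mem_extSuppOf S).mpr ⟨α, hαl, auxMaxRootAbsorb S hM hmax hcP hbsupp hcinn⟩

lemma auxReach_add {ΔP : Finset E} {e e' : E → ℕ} {β : E} :
    auxReach S ΔP (e + e') β ↔ auxReach S ΔP e β ∨ auxReach S ΔP e' β := by
  constructor
  · rintro ⟨γ, h1, h2, h3⟩
    have h4 : (e + e') γ = e γ + e' γ := rfl
    rw [h4] at h2
    rcases Nat.lt_or_ge 0 (e γ) with h | h
    · exact Or.inl ⟨γ, h1, h, h3⟩
    · exact Or.inr ⟨γ, h1, by omega, h3⟩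
  · rintro (⟨γ, h1, h2, h3⟩ | ⟨γ, h1, h2, h3⟩) <;>
      exact ⟨γ, h1, by show 0 < e γ + e' γ; omega, h3⟩

end

/-- Addition theorem for extended supports: for any two degrees `d`
and `d'`, `Δ̃(d + d') = Δ̃(d) ∪ Δ̃(d')`. -/
theorem statement5 {E : Type} [NormedAddCommGroup E] [InnerProductSpace ℝ E]
    [FiniteDimensional ℝ E] (S : RootSystemData E) (ΔP : Finset E)
    (hΔP : ΔP ⊆ S.simples)
    (d d' : E → ℕ) (hd : IsDegree S ΔP d) (hd' : IsDegree S ΔP d')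
    (l l' m : List E) (hl : IsGreedy S ΔP l d) (hl' : IsGreedy S ΔP l' d')
    (hm : IsGreedy S ΔP m (d + d')) :
    extSuppOf S m = extSuppOf S l ∪ extSuppOf S l' := by
  ext β
  rw [Finset.mem_union, auxChar S hΔP hm, auxChar S hΔP hl, auxChar S hΔP hl',
    auxReach_add]
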